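/- Let ζ be a standard exponential random variable, λ : [0,∞) → [0,∞) integrable, κ ≥ 0, u > 0, and define K(t) = ∫_0^t λ(s) ds + κ·1{t ≥ u}. Let τ = inf{t ≥ 0 : K(t) ≥ ζ}. Then P(τ = u) = e^{−∫_0^u λ(s) ds} (1 − e^{−κ}). -/

import Mathlib

open MeasureTheory ProbabilityTheory Real Set

/-- Standard normal cumulative distribution function. -/
noncomputable def stdCDF (x : ℝ) : ℝ := ((gaussianReal 0 1) (Set.Iic x)).toReal

/-- Standard normal density. -/
noncomputable def stdPDF (x : ℝ) : ℝ := gaussianPDFReal 0 1 x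

/-- `W` is a standard one-dimensional Brownian motion (started at 0) under `P`. -/
structure IsStdBM {Ω : Type*} [MeasurableSpace Ω] (P : Measure Ω) (W : ℝ → Ω → ℝ) : Prop where
  meas : ∀ t, Measurable (W t)
  start : ∀ ω, W 0 ω = 0
  cont : ∀ ω, Continuous fun t => W t ω
  incr_law : ∀ s t : ℝ, 0 ≤ s → s ≤ t →
    Measure.map (fun ω => W t ω - W s ω) P = gaussianReal 0 ((t - s).toNNReal)
  indep_incr : ∀ (n : ℕ) (t : Fin (n + 1) → ℝ), Monotone t → (∀ i, 0 ≤ t i) →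
    iIndepFun
      (fun i : Fin n => fun ω => W (t i.succ) ω - W (t i.castSucc) ω) P

/-- Natural filtration of a process `W`. -/
def natFiltration {Ω : Type*} [m0 : MeasurableSpace Ω] (W : ℝ → Ω → ℝ)
    (hW : ∀ t, Measurable (W t)) : Filtration ℝ m0 where
  seq t := ⨆ s ∈ Set.Icc (0 : ℝ) t, MeasurableSpace.comap (W s) inferInstance
  mono' s t hst := biSup_mono fun u hu => ⟨hu.1, hu.2.trans hst⟩
  le' t := iSup₂_le fun s _ => (hW s).comap_le

/-- For `K(t) = ∫_0^t λ(s) ds + κ·1{t ≥ u}` and `τ = inf{t ≥ 0 : K(t) ≥ ζ}` with `ζ`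
standard exponential, `P(τ = u) = e^{-∫_0^u λ(s) ds}(1 - e^{-κ})`. -/
theorem stmt4 {Ω : Type*} [MeasurableSpace Ω] {P : Measure Ω} [IsProbabilityMeasure P]
    (ζ : Ω → ℝ) (hζm : Measurable ζ)
    (hζ : ∀ x : ℝ, 0 ≤ x → (P {ω | x < ζ ω}).toReal = Real.exp (-x))
    (lam : ℝ → ℝ) (hlm : Measurable lam) (hlnn : ∀ s, 0 ≤ lam s)
    (hli : ∀ t : ℝ, IntervalIntegrable lam MeasureTheory.volume 0 t)
    (κ u : ℝ) (hκ : 0 ≤ κ) (hu : 0 < u)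
    (K : ℝ → ℝ) (hK : ∀ t, K t = (∫ s in (0 : ℝ)..t, lam s) + (if u ≤ t then κ else 0))
    (τ : Ω → ℝ) (hτ : ∀ ω, τ ω = sInf {t : ℝ | 0 ≤ t ∧ ζ ω ≤ K t}) :
    (P {ω | τ ω = u}).toReal
      = Real.exp (-(∫ s in (0 : ℝ)..u, lam s)) * (1 - Real.exp (-κ)) := by
  classical
  set A : ℝ → ℝ := fun t => ∫ s in (0:ℝ)..t, lam s with hA
  set a : ℝ := A u with ha
  set b : ℝ := a + κ with hb
  have hAint : ∀ s t : ℝ, IntervalIntegrable lam volume s t := fun s t =>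
    (hli s).symm.trans (hli t)
  have hAcont : Continuous A := intervalIntegral.continuous_primitive hAint 0
  have hAmono : ∀ s t : ℝ, s ≤ t → A s ≤ A t := by
    intro s t hst
    have : A t = A s + ∫ x in s..t, lam x :=
      (intervalIntegral.integral_add_adjacent_intervals (hli s) (hAint s t)).symm
    rw [this]
    have : 0 ≤ ∫ x in s..t, lam x :=
      intervalIntegral.integral_nonneg hst (fun x _ => hlnn x)
    linarith
  have ha0 : 0 ≤ a := by
    have := hAmono 0 u hu.le
    simpa [hA, intervalIntegral.integral_same] using this
  have hab : a ≤ b := by simp [hb, hκ]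
  -- characterization of {τ = u}
  have hτu : ∀ ω : Ω, a < ζ ω → ζ ω ≤ b → τ ω = u := by
    intro ω h1 h2
    rw [hτ]
    have hKu : K u = b := by rw [hK]; simp [hb, ha, hA]
    have huS : u ∈ {t : ℝ | 0 ≤ t ∧ ζ ω ≤ K t} := ⟨hu.le, by rw [hKu]; exact h2⟩
    have hbdd : BddBelow {t : ℝ | 0 ≤ t ∧ ζ ω ≤ K t} := ⟨0, fun t ht => ht.1⟩
    refine le_antisymm (csInf_le hbdd huS) (le_csInf ⟨u, huS⟩ ?_)
    intro t ht
    by_contra hlt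
    push_neg at hlt
    have hKt : K t = A t := by rw [hK]; simp [not_le.mpr hlt, hA]
    have : ζ ω ≤ A t := hKt ▸ ht.2
    have : A t ≤ a := hAmono t u hlt.le
    linarith [ht.2, hKt ▸ ht.2]
  have hτu' : ∀ ω : Ω, τ ω = u → a ≤ ζ ω ∧ ζ ω ≤ b := by
    intro ω hω
    rw [hτ] at hω
    set S := {t : ℝ | 0 ≤ t ∧ ζ ω ≤ K t} with hS
    have hbdd : BddBelow S := ⟨0, fun t ht => ht.1⟩
    have hne : S.Nonempty := by
      by_contra h
      rw [Set.not_nonempty_iff_eq_empty] at h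
      rw [h, Real.sInf_empty] at hω
      exact absurd hω.symm hu.ne'
    have hlow : ∀ t ∈ S, u ≤ t := fun t ht => hω ▸ csInf_le hbdd ht
    constructor
    · -- a ≤ ζ ω via left limit
      have hAt : ∀ t, 0 ≤ t → t < u → A t < ζ ω := by
        intro t ht0 htu
        by_contra h
        push_neg at h
        have : t ∈ S := ⟨ht0, by rw [hK]; simp [not_le.mpr htu, hA]; exact h⟩
        exact absurd (hlow t this) (not_le.mpr htu)
      have hseq : Filter.Tendsto (fun n : ℕ => u - u / (n + 1)) Filter.atTop (nhds u) := by
        have h0 : Filter.Tendsto (fun n : ℕ => u / (n + 1)) Filter.atTop (nhds 0) := by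
          have := tendsto_one_div_add_atTop_nhds_zero_nat.const_mul u
          simpa [div_eq_mul_inv, mul_comm] using this
        have := Filter.Tendsto.const_sub u h0
        simpa using this
      have : Filter.Tendsto (fun n : ℕ => A (u - u / (n + 1))) Filter.atTop (nhds a) :=
        (hAcont.tendsto u).comp hseq
      refine le_of_tendsto this (Filter.Eventually.of_forall fun n => ?_)
      have hpos : (0:ℝ) < (n:ℝ) + 1 := by positivity
      have h1 : 0 < u / ((n:ℝ) + 1) := div_pos hu hpos
      have h2 : u / ((n:ℝ) + 1) ≤ u := by
        rw [div_le_iff₀ hpos]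
        nlinarith [hu.le]
      exact (hAt _ (by linarith) (by linarith)).le
    · -- ζ ω ≤ b via right approach
      have hex : ∀ n : ℕ, ∃ t ∈ S, t < u + 1 / (n + 1) := by
        intro n
        apply exists_lt_of_csInf_lt hne
        rw [hω]
        have : (0:ℝ) < 1 / ((n:ℝ) + 1) := by positivity
        linarith
      choose t htS htlt using hex
      have htKu : ∀ n, ζ ω ≤ A (t n) + κ := by
        intro n
        have h1 := (htS n).2
        rw [hK] at h1
        simpa [hA, hlow _ (htS n)] using h1
      have hts : Filter.Tendsto t Filter.atTop (nhds u) := by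
        have hup : Filter.Tendsto (fun n : ℕ => u + 1 / ((n:ℝ) + 1)) Filter.atTop (nhds u) := by
          have := tendsto_one_div_add_atTop_nhds_zero_nat.const_add u
          simpa using this
        exact tendsto_of_tendsto_of_tendsto_of_le_of_le tendsto_const_nhds hup
          (fun n => hlow _ (htS n)) (fun n => (htlt n).le)
      have : Filter.Tendsto (fun n => A (t n) + κ) Filter.atTop (nhds (a + κ)) :=
        (((hAcont.tendsto u).comp hts).add tendsto_const_nhds)
      exact ge_of_tendsto this (Filter.Eventually.of_forall htKu)
  -- the point mass at a is null
  have hnull : P {ω | ζ ω = a} = 0 := by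
    have key : ∀ x : ℝ, 0 ≤ x → (x < a ∨ (x = 0 ∧ a = 0)) →
        (P {ω | ζ ω = a}).toReal + Real.exp (-a) ≤ Real.exp (-x) := by
      intro x hx0 hcase
      have hmeasD : MeasurableSet {ω | ζ ω = a} := hζm (measurableSet_singleton a)
      have hmeasF : MeasurableSet {ω | a < ζ ω} := hζm measurableSet_Ioi
      have hdisj : Disjoint {ω | ζ ω = a} {ω | a < ζ ω} := by
        rw [Set.disjoint_left]
        intro ω h1 h2
        simp only [Set.mem_setOf_eq] at h1 h2
        linarith
      have hsum : P {ω | ζ ω = a} + P {ω | a < ζ ω}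
          = P ({ω | ζ ω = a} ∪ {ω | a < ζ ω}) :=
        (measure_union hdisj hmeasF).symm
      rcases hcase with hxa | ⟨hx, haa⟩
      · have hsub : {ω | ζ ω = a} ∪ {ω | a < ζ ω} ⊆ {ω | x < ζ ω} := by
          intro ω hω
          rcases hω with h | h
          · simp only [Set.mem_setOf_eq] at h ⊢; linarith
          · simp only [Set.mem_setOf_eq] at h ⊢; linarith
        have hle : P {ω | ζ ω = a} + P {ω | a < ζ ω} ≤ P {ω | x < ζ ω} :=
          hsum ▸ measure_mono hsub
        have := ENNReal.toReal_mono (measure_ne_top P _) hle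
        rw [ENNReal.toReal_add (measure_ne_top P _) (measure_ne_top P _)] at this
        rw [hζ a ha0] at this
        rw [hζ x hx0] at this
        exact this
      · have hle : P {ω | ζ ω = a} + P {ω | a < ζ ω} ≤ 1 := by
          rw [hsum]
          exact prob_le_one
        have := ENNReal.toReal_mono (by norm_num) hle
        rw [ENNReal.toReal_add (measure_ne_top P _) (measure_ne_top P _)] at this
        rw [hζ a ha0] at this
        simp only [ENNReal.toReal_one] at this
        rw [hx]
        simpa [haa] using this
    have hbound : (P {ω | ζ ω = a}).toReal + Real.exp (-a) ≤ Real.exp (-a) := by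
      set x : ℕ → ℝ := fun n => a - a / (n + 1) with hx
      have hxa : ∀ n, 0 ≤ x n ∧ (x n < a ∨ (x n = 0 ∧ a = 0)) := by
        intro n
        have hpos : (0:ℝ) < (n:ℝ) + 1 := by positivity
        rcases eq_or_lt_of_le ha0 with h | h
        · refine ⟨by simp [hx, ← h], Or.inr ⟨by simp [hx, ← h], h.symm⟩⟩
        · have h1 : 0 < a / ((n:ℝ) + 1) := div_pos h hpos
          have h2 : a / ((n:ℝ) + 1) ≤ a := by
            rw [div_le_iff₀ hpos]; nlinarith
          exact ⟨by simp [hx]; linarith, Or.inl (by simp [hx]; linarith)⟩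
      have hxt : Filter.Tendsto x Filter.atTop (nhds a) := by
        have h0 : Filter.Tendsto (fun n : ℕ => a / (n + 1)) Filter.atTop (nhds 0) := by
          have := tendsto_one_div_add_atTop_nhds_zero_nat.const_mul a
          simpa [div_eq_mul_inv, mul_comm] using this
        have := Filter.Tendsto.const_sub a h0
        simpa [hx] using this
      have hexp : Filter.Tendsto (fun n => Real.exp (-(x n))) Filter.atTop
          (nhds (Real.exp (-a))) :=
        (Real.continuous_exp.tendsto _).comp (hxt.neg)
      exact ge_of_tendsto hexp (Filter.Eventually.of_forall fun n =>
        key (x n) (hxa n).1 (hxa n).2)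
    have h0 : (P {ω | ζ ω = a}).toReal ≤ 0 := by linarith
    have h1 : (P {ω | ζ ω = a}).toReal = 0 := le_antisymm h0 ENNReal.toReal_nonneg
    exact (ENNReal.toReal_eq_zero_iff _).mp h1 |>.resolve_right (measure_ne_top P _)
  -- main computation
  set E : Set Ω := {ω | a < ζ ω ∧ ζ ω ≤ b} with hE
  have hmeasE : MeasurableSet E :=
    (hζm measurableSet_Ioi).inter (hζm measurableSet_Iic)
  have hPE : (P E).toReal = Real.exp (-a) - Real.exp (-b) := by
    have hmeasFb : MeasurableSet {ω | b < ζ ω} := hζm measurableSet_Ioi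
    have huni : {ω | a < ζ ω} = E ∪ {ω | b < ζ ω} := by
      ext ω
      simp only [hE, Set.mem_setOf_eq, Set.mem_union]
      constructor
      · intro h
        rcases le_or_gt (ζ ω) b with h2 | h2
        · exact Or.inl ⟨h, h2⟩
        · exact Or.inr h2
      · rintro (⟨h, _⟩ | h)
        · exact h
        · linarith
    have hdisj : Disjoint E {ω | b < ζ ω} := by
      rw [Set.disjoint_left]
      rintro ω ⟨_, h2⟩ h3
      simp only [Set.mem_setOf_eq] at h3
      linarith
    have hsum : P {ω | a < ζ ω} = P E + P {ω | b < ζ ω} := by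
      rw [huni, measure_union hdisj hmeasFb]
    have := congrArg ENNReal.toReal hsum
    rw [ENNReal.toReal_add (measure_ne_top P _) (measure_ne_top P _), hζ a ha0,
      hζ b (le_trans ha0 hab)] at this
    linarith
  have hPτ : P {ω | τ ω = u} = P E := by
    refine le_antisymm ?_ ?_
    · have hsub : {ω | τ ω = u} ⊆ E ∪ {ω | ζ ω = a} := by
        intro ω hω
        obtain ⟨h1, h2⟩ := hτu' ω hω
        rcases eq_or_lt_of_le h1 with h | h
        · exact Or.inr h.symm
        · exact Or.inl ⟨h, h2⟩
      calc P {ω | τ ω = u} ≤ P (E ∪ {ω | ζ ω = a}) := measure_mono hsub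
        _ ≤ P E + P {ω | ζ ω = a} := measure_union_le _ _
        _ = P E := by rw [hnull, add_zero]
    · exact measure_mono fun ω hω => hτu ω hω.1 hω.2
  rw [hPτ, hPE]
  rw [hb, neg_add, Real.exp_add]
  ring
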